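/- Let G be an abelian group such that every endomorphism of G is 'almost scalar', i.e., of the form n + σ where n ∈ ℤ acts by multiplication and σ : G → G has image of finite rank. If G has infinite rank, then G has no direct summand isomorphic to S = ℤ^(ℕ) (the free abelian group of countably infinite rank). -/

import Mathlib

-- key lemma 1: shift eigen implies zero
lemma shift_eq_smul_zero {x : ℕ →₀ ℤ} {n : ℤ} (h : Finsupp.mapDomain Nat.succ x = n • x) :
    x = 0 := by
  have hrec : ∀ i, x i = n * x (i + 1) := by
    intro i
    have := DFunLike.congr_fun h (i + 1)
    rw [Finsupp.mapDomain_apply Nat.succ_injective] at this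
    simpa using this
  have hpow : ∀ k i, x i = n ^ k * x (i + k) := by
    intro k
    induction k with
    | zero => simp
    | succ k ih =>
      intro i
      rw [ih i, hrec (i + k), ← mul_assoc, ← pow_succ]
      ring_nf
  obtain ⟨N, hN⟩ := x.support.exists_nat_subset_range
  ext i
  have h0 : x (i + (N + 1)) = 0 := by
    by_contra hne
    have : i + (N + 1) ∈ x.support := Finsupp.mem_support_iff.mpr hne
    have := hN this
    simp [Finset.mem_range] at this
    omega
  have := hpow (N + 1) i
  rw [h0, mul_zero] at this
  simpa using this

-- key lemma 2: injectivity of g ↦ 1 ⊗ g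
open TensorProduct in
lemma one_tmul_injective {G : Type*} [AddCommGroup G] [NoZeroSMulDivisors ℤ G] :
    Function.Injective (fun g : G => (1:ℚ) ⊗ₜ[ℤ] g) := by
  have hbc : IsBaseChange ℚ (TensorProduct.mk ℤ ℚ G 1) := TensorProduct.isBaseChange ℤ G ℚ
  have hloc : IsLocalizedModule (nonZeroDivisors ℤ) (TensorProduct.mk ℤ ℚ G 1) :=
    (isLocalizedModule_iff_isBaseChange (nonZeroDivisors ℤ) ℚ _).mpr hbc
  intro g₁ g₂ hg
  rw [← sub_eq_zero]
  have : (TensorProduct.mk ℤ ℚ G 1) (g₁ - g₂) = 0 := by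
    simp only [map_sub]
    simpa [TensorProduct.mk_apply, sub_eq_zero] using hg
  obtain ⟨s, hs⟩ := (IsLocalizedModule.eq_zero_iff (nonZeroDivisors ℤ) _).mp this
  have hsne : (s : ℤ) ≠ 0 := nonZeroDivisors.coe_ne_zero s
  exact (smul_eq_zero.mp hs).resolve_left hsne

open TensorProduct in
/-- If every endomorphism of a torsion-free abelian group `G` of infinite rank is almost
scalar (an integer scalar plus an endomorphism whose image has finite ℚ-rank), then `G`
has no direct summand isomorphic to `S = ℤ^(ℕ)`, the free abelian group of countably
infinite rank. -/
theorem stmt12 {G : Type*} [AddCommGroup G] [NoZeroSMulDivisors ℤ G]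
    (hrank : Cardinal.aleph0 ≤ Module.rank ℚ (ℚ ⊗[ℤ] G))
    (hend : ∀ e : G →+ G, ∃ (n : ℤ) (σ : G →+ G),
      Module.rank ℚ (Submodule.span ℚ
        ((fun g : G => (1:ℚ) ⊗ₜ[ℤ] g) '' Set.range σ)) < Cardinal.aleph0 ∧
      ∀ g : G, e g = n • g + σ g) :
    ¬ ∃ (A B : AddSubgroup G), IsCompl A B ∧ Nonempty (A ≃+ (ℕ →₀ ℤ)) := by
  rintro ⟨A, B, hAB, ⟨φ⟩⟩
  classical
  have hAB' : IsCompl (AddSubgroup.toIntSubmodule A) (AddSubgroup.toIntSubmodule B) :=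
    AddSubgroup.toIntSubmodule.isCompl hAB
  set π : G →ₗ[ℤ] (AddSubgroup.toIntSubmodule A) :=
    (AddSubgroup.toIntSubmodule A).linearProjOfIsCompl _ hAB' with hπdef
  -- view elements of the ℤ-submodule as elements of the subgroup (defeq)
  let ι : A → G := fun c => (c : G)
  let e : G →+ G := AddMonoidHom.mk'
    (fun g => ((φ.symm (Finsupp.mapDomain Nat.succ (φ (π g))) : A) : G))
    (by intro g₁ g₂; simp only [show φ (π (g₁ + g₂)) = φ (π g₁) + φ (π g₂) from by rw [map_add]; exact φ.map_add _ _]; simp [Finsupp.mapDomain_add])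
  obtain ⟨n, σ, hfin, hσ⟩ := hend e
  -- e on elements of A
  have hπA : ∀ c : A, π (c : G) = c := fun c =>
    Submodule.linearProjOfIsCompl_apply_left hAB' c
  have heA : ∀ c : A, e (c : G) = ((φ.symm (Finsupp.mapDomain Nat.succ (φ c)) : A) : G) := by
    intro c
    show ((φ.symm (Finsupp.mapDomain Nat.succ (φ (π (c : G)))) : A) : G) = _
    rw [hπA]
  -- the linear map L
  let L : (ℕ →₀ ℤ) →ₗ[ℤ] ℚ ⊗[ℤ] G :=
    { toFun := fun x => (1:ℚ) ⊗ₜ[ℤ] (σ ((φ.symm x : A) : G))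
      map_add' := by intro x y; simp [map_add, TensorProduct.tmul_add]
      map_smul' := by intro m x; simp [map_zsmul, TensorProduct.tmul_smul] }
  have hLinj : Function.Injective L := by
    intro x y hxy
    rw [← sub_eq_zero, ← map_sub] at hxy
    set z := x - y with hz
    -- from L z = 0 deduce z = 0
    have h1 : σ ((φ.symm z : A) : G) = 0 := by
      apply one_tmul_injective (G := G)
      simpa [TensorProduct.tmul_zero] using (show (1:ℚ) ⊗ₜ[ℤ] (σ ((φ.symm z : A) : G)) = 0 from hxy)
    have h2 : e ((φ.symm z : A) : G) = n • ((φ.symm z : A) : G) := by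
      rw [hσ, h1, add_zero]
    rw [heA (φ.symm z), AddEquiv.apply_symm_apply] at h2
    have h3 : ((φ.symm (Finsupp.mapDomain Nat.succ z) : A) : G)
        = ((n • φ.symm z : A) : G) := by
      rw [h2]; norm_cast
    have h4 : φ.symm (Finsupp.mapDomain Nat.succ z) = n • φ.symm z :=
      Subtype.coe_injective h3
    have h5 : Finsupp.mapDomain Nat.succ z = n • z := by
      have := congrArg φ h4
      rwa [AddEquiv.apply_symm_apply, map_zsmul, AddEquiv.apply_symm_apply] at this
    have := shift_eq_smul_zero h5
    rw [hz, sub_eq_zero] at this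
    exact this
  -- linear independence over ℤ then ℚ
  have hli : LinearIndependent ℤ fun i : ℕ => L (Finsupp.single i 1) := by
    have h := (Finsupp.basisSingleOne (R := ℤ) (ι := ℕ)).linearIndependent.map' L
      (LinearMap.ker_eq_bot.mpr hLinj)
    exact h
  have hliQ : LinearIndependent ℚ fun i : ℕ => L (Finsupp.single i 1) :=
    (LinearIndependent.iff_fractionRing ℤ ℚ).mp hli
  -- rank bound
  have hle : Submodule.span ℚ (Set.range fun i : ℕ => L (Finsupp.single i 1)) ≤
      Submodule.span ℚ ((fun g : G => (1:ℚ) ⊗ₜ[ℤ] g) '' Set.range σ) := by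
    apply Submodule.span_mono
    rintro _ ⟨i, rfl⟩
    exact ⟨σ ((φ.symm (Finsupp.single i 1) : A) : G),
      ⟨((φ.symm (Finsupp.single i 1) : A) : G), rfl⟩, rfl⟩
  have hrk := rank_span hliQ
  have hmk : Cardinal.mk (Set.range fun i : ℕ => L (Finsupp.single i 1)) = Cardinal.aleph0 := by
    have h := Cardinal.mk_range_eq_of_injective hliQ.injective
    simpa using h
  have : Cardinal.aleph0 ≤ Module.rank ℚ (Submodule.span ℚ
      ((fun g : G => (1:ℚ) ⊗ₜ[ℤ] g) '' Set.range σ)) := by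
    calc Cardinal.aleph0 = _ := (hrk.trans hmk).symm
    _ ≤ _ := Submodule.rank_mono hle
  exact absurd hfin (not_lt.mpr this)
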